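/- The two series representations of the Kolmogorov distribution agree: for every x > 0, 1 - 2 Σ_{k=1}^∞ (-1)^{k-1} e^{-2k²x²} = (√(2π)/x) Σ_{k=1}^∞ e^{-(2k-1)²π²/(8x²)}. -/

import Mathlib

open Real

lemma summable_exp_le (c : ℝ) (hc : 0 < c) (f : ℕ → ℝ) (hf : ∀ n : ℕ, (n:ℝ) ≤ f n) :
    Summable fun n : ℕ ↦ Real.exp (-(c * f n)) := by
  refine Summable.of_nonneg_of_le (fun n ↦ (Real.exp_pos _).le) (fun n ↦ ?_)
    (summable_geometric_of_lt_one (Real.exp_pos (-c)).le (Real.exp_lt_one_iff.mpr (by linarith)))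
  rw [← Real.exp_nat_mul]
  apply Real.exp_le_exp.2
  have := hf n
  nlinarith

lemma realPoisson (x : ℝ) (hx : 0 < x) :
    ∑' n : ℤ, (-1:ℝ)^n * Real.exp (-(2*x^2 * (n:ℝ)^2)) =
      (1 / (2*x^2/π) ^ ((1:ℝ)/2)) * ∑' n : ℤ, Real.exp (-((2*(n:ℝ)-1)^2 * π^2) / (8*x^2)) := by
  have hπ : (0:ℝ) < π := Real.pi_pos
  have ha : (0:ℝ) < 2*x^2/π := by positivity
  have hπC : ((π:ℝ) : ℂ) ≠ 0 := by exact_mod_cast hπ.ne'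
  have hxC : ((x:ℝ) : ℂ) ≠ 0 := by exact_mod_cast hx.ne'
  have key := Complex.tsum_exp_neg_quadratic (a := ((2*x^2/π : ℝ) : ℂ))
    (by rwa [Complex.ofReal_re]) (Complex.I/2)
  have t1 : ∀ n : ℤ, Complex.exp (-(π:ℂ) * ((2*x^2/π : ℝ) : ℂ) * (n:ℂ) ^ 2
      + 2 * (π:ℂ) * (Complex.I/2) * (n:ℂ))
      = (((-1:ℝ)^n * Real.exp (-(2*x^2*(n:ℝ)^2)) : ℝ) : ℂ) := by
    intro n
    have h1 : (-(π:ℂ) * ((2*x^2/π : ℝ) : ℂ) * (n:ℂ)^2) = ((-(2*x^2*(n:ℝ)^2) : ℝ) : ℂ) := by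
      push_cast
      field_simp
    have h2 : (2 * (π:ℂ) * (Complex.I/2) * (n:ℂ)) = (n:ℂ) * ((π:ℂ) * Complex.I) := by ring
    rw [Complex.exp_add, h1, h2, Complex.exp_int_mul, Complex.exp_pi_mul_I]
    push_cast [Complex.ofReal_exp]
    ring
  have t2 : ∀ n : ℤ, Complex.exp (-(π:ℂ) / ((2*x^2/π : ℝ) : ℂ) * ((n:ℂ) + Complex.I*(Complex.I/2)) ^ 2)
      = ((Real.exp (-((2*(n:ℝ)-1)^2 * π^2) / (8*x^2)) : ℝ) : ℂ) := by
    intro n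
    have hI : (Complex.I*(Complex.I/2)) = -(1/2 : ℂ) := by
      rw [mul_div_assoc', Complex.I_mul_I]; norm_num
    rw [hI, Complex.ofReal_exp]
    congr 1
    push_cast
    field_simp
    ring
  rw [tsum_congr t1, tsum_congr t2, ← Complex.ofReal_tsum, ← Complex.ofReal_tsum] at key
  have hc : (((2*x^2/π : ℝ) : ℂ)) ^ ((1:ℂ)/2) = (((2*x^2/π : ℝ) ^ ((1:ℝ)/2) : ℝ) : ℂ) := by
    rw [Complex.ofReal_cpow ha.le]; norm_num
  rw [hc] at key
  exact_mod_cast key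

theorem kolmogorov_theta_identity (x : ℝ) (hx : 0 < x) :
    1 - 2 * ∑' k : ℕ, (-1 : ℝ) ^ k * Real.exp (-2 * ((k : ℝ) + 1) ^ 2 * x ^ 2) =
      (Real.sqrt (2 * Real.pi) / x) *
        ∑' k : ℕ, Real.exp (-((2 * ((k : ℝ) + 1) - 1) ^ 2 * Real.pi ^ 2) / (8 * x ^ 2)) := by
  have hπ : (0:ℝ) < π := Real.pi_pos
  have hx0 : x ≠ 0 := hx.ne'
  set f : ℤ → ℝ := fun n ↦ (-1:ℝ)^n * Real.exp (-(2*x^2 * (n:ℝ)^2)) with hfdef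
  set g : ℤ → ℝ := fun n ↦ Real.exp (-((2*(n:ℝ)-1)^2 * π^2) / (8*x^2)) with hgdef
  set S : ℝ := ∑' k : ℕ, (-1 : ℝ) ^ k * Real.exp (-2 * ((k : ℝ) + 1) ^ 2 * x ^ 2) with hSdef
  set T : ℝ := ∑' k : ℕ, Real.exp (-((2 * ((k : ℝ) + 1) - 1) ^ 2 * π ^ 2) / (8 * x ^ 2)) with hTdef
  -- summability
  have hs1 : Summable fun n : ℕ ↦ Real.exp (-(2*x^2 * ((n:ℝ)+1)^2)) := by
    refine summable_exp_le (2*x^2) (by positivity) _ fun n ↦ ?_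
    have : (0:ℝ) ≤ n := n.cast_nonneg
    nlinarith
  have hs2 : Summable fun n : ℕ ↦ Real.exp (-(π^2/(8*x^2) * (2*(n:ℝ)+1)^2)) := by
    refine summable_exp_le (π^2/(8*x^2)) (by positivity) _ fun n ↦ ?_
    have : (0:ℝ) ≤ n := n.cast_nonneg
    nlinarith
  have hs3 : Summable fun n : ℕ ↦ Real.exp (-(π^2/(8*x^2) * (2*(n:ℝ)+3)^2)) := by
    refine summable_exp_le (π^2/(8*x^2)) (by positivity) _ fun n ↦ ?_
    have : (0:ℝ) ≤ n := n.cast_nonneg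
    nlinarith
  have hf1 : Summable fun n : ℕ ↦ f ((n:ℤ)+1) := by
    apply Summable.of_abs
    refine hs1.congr fun n ↦ ?_
    simp only [hfdef]
    rw [abs_mul, abs_neg_one_zpow, one_mul, Real.abs_exp]
    congr 1
    push_cast
    ring
  have hf2 : Summable fun n : ℕ ↦ f (-((n:ℤ)+1)) := by
    apply Summable.of_abs
    refine hs1.congr fun n ↦ ?_
    simp only [hfdef]
    rw [abs_mul, abs_neg_one_zpow, one_mul, Real.abs_exp]
    congr 1
    push_cast
    ring
  have hg1 : Summable fun n : ℕ ↦ g ((n:ℤ)+1) := by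
    refine hs2.congr fun n ↦ ?_
    simp only [hgdef]
    congr 1
    push_cast
    field_simp
    ring
  have hg2 : Summable fun n : ℕ ↦ g (-((n:ℤ)+1)) := by
    refine hs3.congr fun n ↦ ?_
    simp only [hgdef]
    congr 1
    push_cast
    field_simp
    ring
  have hT : Summable fun k : ℕ ↦ Real.exp (-((2 * ((k : ℝ) + 1) - 1) ^ 2 * π ^ 2) / (8 * x ^ 2)) := by
    refine hs2.congr fun n ↦ ?_
    congr 1
    field_simp
    ring
  -- LHS: sum over ℤ of f equals 1 - 2*S
  have hZf : ∑' n : ℤ, f n = 1 - 2 * S := by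
    rw [tsum_of_add_one_of_neg_add_one hf1 hf2]
    have h0 : f 0 = 1 := by simp [hfdef]
    have he : (∑' n : ℕ, f (-((n:ℤ)+1))) = ∑' n : ℕ, f ((n:ℤ)+1) := by
      refine tsum_congr fun n ↦ ?_
      simp only [hfdef]
      rw [zpow_neg, ← inv_zpow, inv_neg, inv_one]
      congr 2
      push_cast
      ring
    have hS : (∑' n : ℕ, f ((n:ℤ)+1)) = -S := by
      rw [hSdef, ← tsum_neg]
      refine tsum_congr fun n ↦ ?_
      simp only [hfdef]
      rw [zpow_add_one₀ (by norm_num : (-1:ℝ) ≠ 0), zpow_natCast]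
      have : (((n:ℤ):ℝ)+1)^2 = ((n:ℝ)+1)^2 := by push_cast; ring
      rw [show (-(2*x^2 * (((n:ℤ)+1 : ℤ):ℝ)^2)) = -2 * ((n:ℝ)+1)^2 * x^2 by push_cast; ring]
      ring
    rw [he, hS, h0]
    ring
  -- RHS: sum over ℤ of g equals 2*T
  have hZg : ∑' n : ℤ, g n = 2 * T := by
    rw [tsum_of_add_one_of_neg_add_one hg1 hg2]
    have hA : (∑' n : ℕ, g ((n:ℤ)+1)) = T := by
      rw [hTdef]
      refine tsum_congr fun n ↦ ?_
      simp only [hgdef]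
      congr 1
      push_cast
      ring
    have hB : g 0 + (∑' n : ℕ, g (-((n:ℤ)+1))) = T := by
      rw [hTdef, Summable.tsum_eq_zero_add hT]
      congr 1
      · simp only [hgdef]
        norm_num
      · refine (tsum_congr fun n ↦ ?_).symm
        simp only [hgdef]
        congr 1
        push_cast
        ring
    rw [add_assoc, hA, hB]
    ring
  -- Poisson summation
  have key := realPoisson x hx
  rw [hZf, hZg] at key
  rw [key, show (1 / (2*x^2/π) ^ ((1:ℝ)/2)) * (2 * T) = ((1 / (2*x^2/π) ^ ((1:ℝ)/2)) * 2) * T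
    by ring]
  congr 1
  rw [← Real.sqrt_eq_rpow]
  rw [show 2*x^2/π = (2*π)*(x/π)^2 by field_simp,
    Real.sqrt_mul (by positivity) _, Real.sqrt_sq (by positivity)]
  have h2π : Real.sqrt (2*π)^2 = 2*π := Real.sq_sqrt (by positivity)
  have hne : Real.sqrt (2*π) ≠ 0 := by positivity
  have s2 : Real.sqrt 2 * Real.sqrt 2 = 2 := Real.mul_self_sqrt (by norm_num)
  have sπ : Real.sqrt π * Real.sqrt π = π := Real.mul_self_sqrt hπ.le
  have hsne : Real.sqrt (2*π) * (x/π) ≠ 0 := by positivity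
  field_simp
  linear_combination (-1 : ℝ) * h2π
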